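/- Let G be a simple connected graph and (u,v) an edge with no common neighbors, i.e., N(u) ∩ N(v) = ∅. Then the Ollivier–Ricci curvature κ(u,v) = 1 − W₁(μ_u, μ_v)/d(u,v) satisfies κ(u,v) ≤ 0. -/
import Mathlib


open SimpleGraph Finset

variable {V : Type*}

/-- 1-step uniform random walk measure at `u`. -/
noncomputable def rwMeasure (G : SimpleGraph V) [Fintype V] [DecidableRel G.Adj] (u : V) : V → ℝ :=
  fun w => if G.Adj u w then (G.degree u : ℝ)⁻¹ else 0

/-- `π` is a coupling of the random walk measures `μ_u` and `μ_v`. -/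
def IsCoupling (G : SimpleGraph V) [Fintype V] [DecidableRel G.Adj]
    (u v : V) (π : V → V → ℝ) : Prop :=
  (∀ p q, 0 ≤ π p q) ∧
  (∀ p, ∑ q, π p q = rwMeasure G u p) ∧
  (∀ q, ∑ p, π p q = rwMeasure G v q)

/-- Transport cost of `π` with respect to the shortest-path distance. -/
noncomputable def transportCost (G : SimpleGraph V) [Fintype V] (π : V → V → ℝ) : ℝ :=
  ∑ p, ∑ q, π p q * (G.dist p q : ℝ)

/-- L¹-Wasserstein distance between the 1-step random walk measures at `u` and `v`. -/
noncomputable def W1 (G : SimpleGraph V) [Fintype V] [DecidableRel G.Adj] (u v : V) : ℝ :=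
  sInf {c : ℝ | ∃ π : V → V → ℝ, IsCoupling G u v π ∧ transportCost G π = c}

lemma rwMeasure_nonneg (G : SimpleGraph V) [Fintype V] [DecidableRel G.Adj] (u w : V) :
    0 ≤ rwMeasure G u w := by
  unfold rwMeasure
  split <;> positivity

lemma sum_rwMeasure (G : SimpleGraph V) [Fintype V] [DecidableRel G.Adj] (u : V)
    (h : 0 < G.degree u) : ∑ w, rwMeasure G u w = 1 := by
  unfold rwMeasure
  rw [← Finset.sum_filter]
  have hf : Finset.univ.filter (G.Adj u) = G.neighborFinset u := by
    ext w; simp [SimpleGraph.mem_neighborFinset]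
  rw [hf, Finset.sum_const, SimpleGraph.card_neighborFinset_eq_degree, nsmul_eq_mul,
    mul_inv_cancel₀]
  exact_mod_cast h.ne'

lemma rwMeasure_eq_zero (G : SimpleGraph V) [Fintype V] [DecidableRel G.Adj] {u w : V}
    (h : ¬ G.Adj u w) : rwMeasure G u w = 0 := by
  simp [rwMeasure, h]

theorem ricci_curvature_nonpos (G : SimpleGraph V) [Fintype V] [DecidableRel G.Adj]
    (hconn : G.Connected) (u v : V) (huv : G.Adj u v)
    (hdisj : G.neighborSet u ∩ G.neighborSet v = ∅) :
    1 - W1 G u v ≤ 0 := by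
  have hdu : 0 < G.degree u := (G.degree_pos_iff_exists_adj u).mpr ⟨v, huv⟩
  have hdv : 0 < G.degree v := (G.degree_pos_iff_exists_adj v).mpr ⟨u, huv.symm⟩
  suffices h : 1 ≤ W1 G u v by linarith
  apply le_csInf
  · -- nonempty: product coupling
    refine ⟨transportCost G (fun p q => rwMeasure G u p * rwMeasure G v q),
      fun p q => rwMeasure G u p * rwMeasure G v q, ⟨?_, ?_, ?_⟩, rfl⟩
    · exact fun p q => mul_nonneg (rwMeasure_nonneg G u p) (rwMeasure_nonneg G v q)
    · intro p
      rw [← Finset.mul_sum, sum_rwMeasure G v hdv, mul_one]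
    · intro q
      rw [← Finset.sum_mul, sum_rwMeasure G u hdu, one_mul]
  · rintro c ⟨π, ⟨hnn, hmu, hmv⟩, rfl⟩
    have hkey : ∀ p q, π p q ≤ π p q * (G.dist p q : ℝ) := by
      intro p q
      rcases eq_or_lt_of_le (hnn p q) with h0 | hpos
      · simp [← h0]
      · have hup : G.Adj u p := by
          by_contra hup
          have := hmu p
          rw [rwMeasure_eq_zero G hup] at this
          have := (Finset.sum_eq_zero_iff_of_nonneg (fun q _ => hnn p q)).mp this q (Finset.mem_univ q)
          exact hpos.ne this.symm
        have hvq : G.Adj v q := by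
          by_contra hvq
          have := hmv q
          rw [rwMeasure_eq_zero G hvq] at this
          have := (Finset.sum_eq_zero_iff_of_nonneg (fun p _ => hnn p q)).mp this p (Finset.mem_univ p)
          exact hpos.ne this.symm
        have hne : p ≠ q := by
          rintro rfl
          have : p ∈ G.neighborSet u ∩ G.neighborSet v := ⟨hup, hvq⟩
          rw [hdisj] at this
          exact this
        have hd : 1 ≤ G.dist p q := by
          have := hconn.pos_dist_of_ne (u := p) (v := q) hne
          omega
        nlinarith [hpos, (Nat.one_le_cast (α := ℝ)).mpr hd]
    calc 1 = ∑ p, rwMeasure G u p := (sum_rwMeasure G u hdu).symm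
      _ = ∑ p, ∑ q, π p q := by simp_rw [hmu]
      _ ≤ ∑ p, ∑ q, π p q * (G.dist p q : ℝ) :=
        Finset.sum_le_sum fun p _ => Finset.sum_le_sum fun q _ => hkey p q
      _ = transportCost G π := rfl
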